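/- For every polynomial p of degree at most 3 and any parameter a₄ ∈ ℝ, the finite difference formula FD4a is exact at x: [((2+a₄)/4)·p(x-Δx) + (-2 - 3a₄/4)·p̄₋ + a₄·p(x) + (2 - 3a₄/4)·p̄₊ + ((-2+a₄)/4)·p(x+Δx)] / Δx = p'(x), where p̄₋ = (1/Δx)∫_{x-Δx}^{x} p and p̄₊ = (1/Δx)∫_{x}^{x+Δx} p. -/

import Mathlib

lemma cubic_int (c0 c1 c2 c3 u v : ℝ) :
    ∫ t in u..v, (c0 + c1*t + c2*t^2 + c3*t^3)
      = (c0*v + c1*v^2/2 + c2*v^3/3 + c3*v^4/4)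
        - (c0*u + c1*u^2/2 + c2*u^3/3 + c3*u^4/4) := by
  apply intervalIntegral.integral_eq_sub_of_hasDerivAt
  · intro t _
    have h : HasDerivAt (fun t : ℝ => c0*t + c1*t^2/2 + c2*t^3/3 + c3*t^4/4)
        (c0*1 + c1*(↑2*t^1)/2 + c2*(↑3*t^2)/3 + c3*(↑4*t^3)/4) t := by
      exact ((((hasDerivAt_id t).const_mul c0).add
        (((hasDerivAt_pow 2 t).const_mul c1).div_const 2)).add
        (((hasDerivAt_pow 3 t).const_mul c2).div_const 3)).add
        (((hasDerivAt_pow 4 t).const_mul c3).div_const 4)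
    refine h.congr_deriv ?_
    ring
  · apply Continuous.intervalIntegrable
    continuity

/-- FD4a is exact on `P³` for every value of the parameter `a₄`. -/
theorem FD4a_exact (Δx : ℝ) (hΔ : 0 < Δx) (a : ℝ)
    (p : Polynomial ℝ) (hp : p.natDegree ≤ 3) (x : ℝ) :
    (((2 + a)/4) * p.eval (x - Δx)
        + (-2 - 3*a/4) * ((1/Δx) * ∫ t in (x - Δx)..x, p.eval t)
        + a * p.eval x
        + (2 - 3*a/4) * ((1/Δx) * ∫ t in x..(x + Δx), p.eval t)
        + ((-2 + a)/4) * p.eval (x + Δx)) / Δx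
      = (Polynomial.derivative p).eval x := by
  have hlt : p.natDegree < 4 := lt_of_le_of_lt hp (by norm_num)
  set c0 := p.coeff 0
  set c1 := p.coeff 1
  set c2 := p.coeff 2
  set c3 := p.coeff 3
  have heval : ∀ t : ℝ, p.eval t = c0 + c1*t + c2*t^2 + c3*t^3 := by
    intro t
    rw [Polynomial.eval_eq_sum_range' hlt]
    simp [Finset.sum_range_succ]
    rfl
  have hderiv : (Polynomial.derivative p).eval x = c1 + 2*c2*x + 3*c3*x^2 := by
    conv_lhs => rw [p.as_sum_range' 4 hlt]
    simp [Finset.sum_range_succ, Polynomial.derivative_monomial]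
    ring
  simp only [heval, hderiv, cubic_int]
  field_simp
  ring
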